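/- Let (G,d) be a metric space, 𝔛 a Banach space, p ∈ [1,∞), and f : G → 𝔛 a 1-Lipschitz map. Let X ⊆ G be a finite subset, K a Markov transition kernel on X reversible with respect to a probability measure π on X. Suppose there exist l > 0 and c ∈ (0,1) such that Σ_{u,v ∈ X, d(u,v) ≥ l} d(u,v)^p π(u)π(v) ≥ c · Σ_{u,v ∈ X} d(u,v)^p π(u)π(v) > 0, and let λ > 0 be such that λ · Σ_{u,v ∈ X} ‖h(u)−h(v)‖^p π(u)π(v) ≤ Σ_{u,v ∈ X} ‖h(u)−h(v)‖^p K(u,v)π(u) for every function h : X → 𝔛. Then the compression function of f satisfies ρ_f(l) ≤ diam_d(X) · ( (1/λ) · (Σ_{u,v ∈ X} ‖f(u)−f(v)‖^p K(u,v)π(u)) / (c · Σ_{u,v ∈ X} d(u,v)^p π(u)π(v)) )^{1/p}. -/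

import Mathlib

open scoped BigOperators

noncomputable section

/-- The compression function of a map from a metric space to a normed space. -/
def compressionFn {G : Type*} [PseudoMetricSpace G] {E : Type*} [AddGroup E] [Norm E]
    (f : G → E) (t : ℝ) : ℝ :=
  sInf {r : ℝ | ∃ x y : G, t ≤ dist x y ∧ r = ‖f x - f y‖}

open Classical in
theorem statement13
    {G : Type*} [MetricSpace G] {𝔛 : Type*} [NormedAddCommGroup 𝔛] [NormedSpace ℝ 𝔛]
    (p : ℝ) (hp : 1 ≤ p)
    (f : G → 𝔛) (hf : ∀ x y : G, ‖f x - f y‖ ≤ dist x y)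
    (X : Finset G) (K : X → X → ℝ) (π : X → ℝ)
    (hK0 : ∀ u v, 0 ≤ K u v) (hK1 : ∀ u, ∑ v : X, K u v = 1)
    (hπ0 : ∀ u, 0 ≤ π u) (hπ1 : ∑ u : X, π u = 1)
    (hrev : ∀ u v, π u * K u v = π v * K v u)
    (l : ℝ) (hl : 0 < l) (c : ℝ) (hc : c ∈ Set.Ioo (0 : ℝ) 1)
    (hmasspos : 0 < ∑ u : X, ∑ v : X, dist (u : G) (v : G) ^ p * π u * π v)
    (hmass : c * ∑ u : X, ∑ v : X, dist (u : G) (v : G) ^ p * π u * π v ≤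
      ∑ u : X, ∑ v : X, (if l ≤ dist (u : G) (v : G)
        then dist (u : G) (v : G) ^ p * π u * π v else 0))
    (lam : ℝ) (hlam : 0 < lam)
    (hpoincare : ∀ h : X → 𝔛,
      lam * ∑ u : X, ∑ v : X, ‖h u - h v‖ ^ p * π u * π v ≤
        ∑ u : X, ∑ v : X, ‖h u - h v‖ ^ p * K u v * π u) :
    compressionFn f l ≤
      Metric.diam (X : Set G) *
        ((1 / lam) * (∑ u : X, ∑ v : X, ‖f (u : G) - f (v : G)‖ ^ p * K u v * π u) /
          (c * ∑ u : X, ∑ v : X, dist (u : G) (v : G) ^ p * π u * π v)) ^ (1 / p) := by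
  have hp0 : (0 : ℝ) < p := lt_of_lt_of_le one_pos hp
  set ρ : ℝ := compressionFn f l with hρdef
  set dm : ℝ := Metric.diam (X : Set G) with hdm
  set D : ℝ := ∑ u : X, ∑ v : X, dist (u : G) (v : G) ^ p * π u * π v with hD
  set E : ℝ := ∑ u : X, ∑ v : X, ‖f (u : G) - f (v : G)‖ ^ p * K u v * π u with hE
  set F : ℝ := ∑ u : X, ∑ v : X, ‖f (u : G) - f (v : G)‖ ^ p * π u * π v with hF
  have hSbdd : BddBelow {r : ℝ | ∃ x y : G, l ≤ dist x y ∧ r = ‖f x - f y‖} :=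
    ⟨0, fun r hr => by obtain ⟨x, y, _, rfl⟩ := hr; exact norm_nonneg _⟩
  have hρ0 : 0 ≤ ρ := by
    apply Real.sInf_nonneg
    rintro r ⟨x, y, _, rfl⟩
    exact norm_nonneg _
  have hρle : ∀ u v : X, l ≤ dist (u : G) (v : G) → ρ ≤ ‖f (u : G) - f (v : G)‖ :=
    fun u v h => csInf_le hSbdd ⟨u, v, h, rfl⟩
  have hdm0 : 0 ≤ dm := Metric.diam_nonneg
  have hdmle : ∀ u v : X, dist (u : G) (v : G) ≤ dm := fun u v =>
    Metric.dist_le_diam_of_mem X.finite_toSet.isBounded u.2 v.2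
  -- key step A:  ρ^p * (c * D) ≤ dm^p * F
  have hA : ρ ^ p * (c * D) ≤ dm ^ p * F := by
    have h1 : ρ ^ p * (c * D) ≤ ρ ^ p *
        ∑ u : X, ∑ v : X, (if l ≤ dist (u : G) (v : G)
          then dist (u : G) (v : G) ^ p * π u * π v else 0) :=
      mul_le_mul_of_nonneg_left hmass (Real.rpow_nonneg hρ0 p)
    have h2 : ρ ^ p *
        (∑ u : X, ∑ v : X, (if l ≤ dist (u : G) (v : G)
          then dist (u : G) (v : G) ^ p * π u * π v else 0)) ≤ dm ^ p * F := by
      rw [hF, Finset.mul_sum, Finset.mul_sum]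
      refine Finset.sum_le_sum fun u _ => ?_
      rw [Finset.mul_sum, Finset.mul_sum]
      refine Finset.sum_le_sum fun v _ => ?_
      by_cases h : l ≤ dist (u : G) (v : G)
      · rw [if_pos h]
        have hππ : 0 ≤ π u * π v := mul_nonneg (hπ0 u) (hπ0 v)
        have hr1 : ρ ^ p ≤ ‖f (u : G) - f (v : G)‖ ^ p :=
          Real.rpow_le_rpow hρ0 (hρle u v h) hp0.le
        have hr2 : dist (u : G) (v : G) ^ p ≤ dm ^ p :=
          Real.rpow_le_rpow dist_nonneg (hdmle u v) hp0.le
        calc ρ ^ p * (dist (u : G) (v : G) ^ p * π u * π v)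
            = (ρ ^ p * dist (u : G) (v : G) ^ p) * (π u * π v) := by ring
          _ ≤ (‖f (u : G) - f (v : G)‖ ^ p * dm ^ p) * (π u * π v) :=
              mul_le_mul_of_nonneg_right
                (mul_le_mul hr1 hr2 (Real.rpow_nonneg dist_nonneg p)
                  (Real.rpow_nonneg (norm_nonneg _) p)) hππ
          _ = dm ^ p * (‖f (u : G) - f (v : G)‖ ^ p * π u * π v) := by ring
      · rw [if_neg h, mul_zero]
        have : (0:ℝ) ≤ ‖f (u : G) - f (v : G)‖ ^ p * π u * π v :=
          mul_nonneg (mul_nonneg (Real.rpow_nonneg (norm_nonneg _) p) (hπ0 u)) (hπ0 v)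
        positivity
    exact h1.trans h2
  -- Poincaré:  lam * F ≤ E
  have hB : lam * F ≤ E := hpoincare (fun u => f (u : G))
  have hE0 : 0 ≤ E := by
    rw [hE]
    refine Finset.sum_nonneg fun u _ => Finset.sum_nonneg fun v _ => ?_
    exact mul_nonneg (mul_nonneg (Real.rpow_nonneg (norm_nonneg _) p) (hK0 u v)) (hπ0 u)
  have hcD : 0 < c * D := mul_pos hc.1 hmasspos
  have hFle : F ≤ 1 / lam * E := by
    rw [one_div, ← mul_le_mul_iff_right₀ hlam, ← mul_assoc, mul_inv_cancel₀ hlam.ne', one_mul]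
    exact hB
  set Q : ℝ := 1 / lam * E / (c * D) with hQ
  have hQ0 : 0 ≤ Q := div_nonneg (mul_nonneg (by positivity) hE0) hcD.le
  have hρpQ : ρ ^ p ≤ dm ^ p * Q := by
    have h1 : ρ ^ p * (c * D) ≤ dm ^ p * (1 / lam * E) :=
      hA.trans (mul_le_mul_of_nonneg_left hFle (Real.rpow_nonneg hdm0 p))
    rw [hQ, ← mul_div_assoc, le_div_iff₀ hcD]
    exact h1
  have hkey1 : (ρ ^ p) ^ (1 / p) = ρ := by
    rw [← Real.rpow_mul hρ0, mul_one_div, div_self hp0.ne', Real.rpow_one]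
  have hkey2 : (dm ^ p) ^ (1 / p) = dm := by
    rw [← Real.rpow_mul hdm0, mul_one_div, div_self hp0.ne', Real.rpow_one]
  calc ρ = (ρ ^ p) ^ (1 / p) := hkey1.symm
    _ ≤ (dm ^ p * Q) ^ (1 / p) :=
        Real.rpow_le_rpow (Real.rpow_nonneg hρ0 p) hρpQ (by positivity)
    _ = dm * Q ^ (1 / p) := by
        rw [Real.mul_rpow (Real.rpow_nonneg hdm0 p) hQ0, hkey2]

end
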